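/- Let n ≥ 1. There exists a constant C depending only on n with the following property. Let S ⊆ ℝⁿ be a bounded open set and let g be a real-valued function that is continuous on the closure of S, differentiable at every point of S, and vanishes identically on the topological boundary of S. Suppose that for some constants B, D > 0 one has (i) ∫_S g(x)² dx ≤ D and (ii) |∇g(x) − ∇g(y)| ≤ B·|x − y|^{1/2} for all x, y ∈ S. Then ∫_S |∇g(x)|⁶ dx ≤ C·B⁴·D; equivalently, ‖∇g‖_{L⁶(S)} ≤ C^{1/6}·B^{2/3}·D^{1/6}. -/

import Mathlib

open MeasureTheory
open scoped ENNReal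

open Set

lemma sq_rpow_half (v : ℝ) : (v^2) ^ ((1:ℝ)/2) = |v| := by
  rw [← sq_abs, ← Real.rpow_natCast |v| 2, ← Real.rpow_mul (abs_nonneg v)]
  norm_num

lemma coreL1 {I : Set ℝ} {h : ℝ → ℝ} {B x : ℝ} (hB : 0 < B)
    (hdiff : ∀ y ∈ I, DifferentiableAt ℝ h y)
    (hHol : ∀ y ∈ I, ∀ z ∈ I, |deriv h y - deriv h z| ≤ B * |y - z| ^ ((1:ℝ)/2))
    (hxI : x ∈ I) (hM : 0 < deriv h x)
    (hsub : Set.Ico x (x + (deriv h x / (2*B))^2) ⊆ I) :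
    ∃ c, Set.Icc c (c + (deriv h x / (2*B))^2/8) ⊆ Set.Ico x (x + (deriv h x / (2*B))^2) ∧
      ∀ y ∈ Set.Icc c (c + (deriv h x / (2*B))^2/8),
        (deriv h x * (deriv h x / (2*B))^2/8)^2 ≤ (h y)^2 ∧
        deriv h x / 2 ≤ |deriv h y| ∧ |deriv h y| ≤ 3 * deriv h x / 2 := by
  set M := deriv h x with hMdef
  set ρ := (M / (2*B))^2 with hρdef
  have hρpos : 0 < ρ := by positivity
  -- slope bounds on the forward interval
  have slope : ∀ y ∈ Set.Ico x (x + ρ), M/2 ≤ deriv h y ∧ deriv h y ≤ 3*M/2 := by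
    intro y hy
    have hyI : y ∈ I := hsub hy
    have h1 : |deriv h y - deriv h x| ≤ B * |y - x| ^ ((1:ℝ)/2) := hHol y hyI x hxI
    have h2 : |y - x| ≤ ρ := by
      rw [abs_of_nonneg (by linarith [hy.1])]
      linarith [hy.2]
    have h3 : |y - x| ^ ((1:ℝ)/2) ≤ ρ ^ ((1:ℝ)/2) :=
      Real.rpow_le_rpow (abs_nonneg _) h2 (by norm_num)
    have h4 : ρ ^ ((1:ℝ)/2) = M / (2*B) := by
      rw [hρdef, sq_rpow_half, abs_of_pos (by positivity)]
    have h5 : B * |y - x| ^ ((1:ℝ)/2) ≤ M/2 := by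
      calc B * |y - x| ^ ((1:ℝ)/2) ≤ B * (M / (2*B)) := by
            rw [← h4]; exact mul_le_mul_of_nonneg_left h3 hB.le
        _ = M/2 := by field_simp
    have := abs_le.1 (h1.trans h5)
    constructor <;> linarith [this.1, this.2]
  -- monotone increments via MVT
  have incr : ∀ a b : ℝ, a ∈ Set.Ico x (x + ρ) → b ∈ Set.Ico x (x + ρ) → a ≤ b →
      M/2 * (b - a) ≤ h b - h a := by
    intro a b ha hb hab
    rcases eq_or_lt_of_le hab with rfl | hlt
    · simp
    · have hIcc : Set.Icc a b ⊆ Set.Ico x (x + ρ) := fun t ht =>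
        ⟨le_trans ha.1 ht.1, lt_of_le_of_lt ht.2 hb.2⟩
      have hcont : ContinuousOn h (Set.Icc a b) := fun t ht =>
        ((hdiff t (hsub (hIcc ht))).continuousAt).continuousWithinAt
      obtain ⟨ξ, hξ, hslope⟩ := exists_hasDerivAt_eq_slope h (deriv h) hlt hcont
        (fun t ht => (hdiff t (hsub (hIcc ⟨ht.1.le, ht.2.le⟩))).hasDerivAt)
      have hξmem : ξ ∈ Set.Ico x (x + ρ) := hIcc ⟨hξ.1.le, hξ.2.le⟩
      have := (slope ξ hξmem).1
      rw [hslope] at this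
      have hba : 0 < b - a := by linarith
      calc M/2 * (b - a) ≤ (h b - h a) / (b - a) * (b - a) :=
            mul_le_mul_of_nonneg_right this hba.le
        _ = h b - h a := by field_simp
  set m := h (x + ρ/2) with hm
  have hmid : x + ρ/2 ∈ Set.Ico x (x + ρ) := ⟨by linarith, by linarith⟩
  rcases le_or_gt 0 m with hm0 | hm0
  · -- m ≥ 0 : use [x + 3ρ/4, x + 7ρ/8]
    refine ⟨x + 3*ρ/4, ?_, ?_⟩
    · intro y hy
      rw [Set.mem_Icc] at hy
      exact ⟨by linarith [hy.1], by linarith [hy.2]⟩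
    · intro y hy
      rw [Set.mem_Icc] at hy
      have hymem : y ∈ Set.Ico x (x + ρ) := ⟨by linarith [hy.1], by linarith [hy.2]⟩
      have hincr := incr (x + ρ/2) y hmid hymem (by linarith [hy.1])
      have hval : M * ρ/8 ≤ h y := by nlinarith [hincr, hm0, hMdef, hρpos, hM]
      refine ⟨?_, ?_, ?_⟩
      · have h0 : (0:ℝ) ≤ M * ρ/8 := by positivity
        calc (M * ρ/8)^2 ≤ (h y)^2 := by nlinarith [hval, h0]
          _ = (h y)^2 := rfl
      · have := (slope y hymem).1
        calc M/2 ≤ deriv h y := this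
          _ ≤ |deriv h y| := le_abs_self _
      · have h1 := (slope y hymem).1
        have h2 := (slope y hymem).2
        rw [abs_of_pos (by linarith)]
        exact h2
  · -- m < 0 : use [x, x + ρ/8]
    refine ⟨x, ?_, ?_⟩
    · intro y hy
      rw [Set.mem_Icc] at hy
      exact ⟨by linarith [hy.1], by linarith [hy.2]⟩
    · intro y hy
      rw [Set.mem_Icc] at hy
      have hymem : y ∈ Set.Ico x (x + ρ) := ⟨by linarith [hy.1], by linarith [hy.2]⟩
      have hincr := incr y (x + ρ/2) hymem hmid (by linarith [hy.2])
      have hval : h y ≤ -(M * ρ/8) := by nlinarith [hincr, hm0, hρpos, hM]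
      refine ⟨?_, ?_, ?_⟩
      · have h0 : (0:ℝ) ≤ M * ρ/8 := by positivity
        nlinarith [hval, h0]
      · have := (slope y hymem).1
        calc M/2 ≤ deriv h y := this
          _ ≤ |deriv h y| := le_abs_self _
      · have h1 := (slope y hymem).1
        have h2 := (slope y hymem).2
        rw [abs_of_pos (by linarith)]
        exact h2

lemma exitF {I : Set ℝ} {h : ℝ → ℝ} {B x : ℝ} (hI : IsOpen I) (hB : 0 < B)
    (hcont : Continuous h) (hzero : ∀ y, y ∉ I → h y = 0)
    (hdiff : ∀ y ∈ I, DifferentiableAt ℝ h y)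
    (hHol : ∀ y ∈ I, ∀ z ∈ I, |deriv h y - deriv h z| ≤ B * |y - z| ^ ((1:ℝ)/2))
    (hxI : x ∈ I) (hM : deriv h x ≠ 0)
    (hnot : ¬ (Set.Ico x (x + (deriv h x/(2*B))^2) ⊆ I)) :
    deriv h x * h x < 0 := by
  set M := deriv h x with hMdef
  set ρ := (M/(2*B))^2 with hρdef
  have hMne : M ≠ 0 := hM
  have hρpos : 0 < ρ := by
    have h1 : M/(2*B) ≠ 0 := div_ne_zero hMne (by positivity)
    positivity
  set E := Set.Ico x (x + ρ) ∩ Iᶜ with hE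
  obtain ⟨t0, ht0, ht0n⟩ := Set.not_subset.1 hnot
  have hne : E.Nonempty := ⟨t0, ht0, ht0n⟩
  have hbdd : BddBelow E := ⟨x, fun t ht => ht.1.1⟩
  set T := sInf E with hT
  have hTnI : T ∉ I := by
    have h1 : T ∈ closure E := csInf_mem_closure hne hbdd
    have h2 : closure E ⊆ Iᶜ := by
      calc closure E ⊆ closure Iᶜ := closure_mono Set.inter_subset_right
        _ = Iᶜ := (hI.isClosed_compl).closure_eq
    exact h2 h1
  have hTlt : T < x + ρ := lt_of_le_of_lt (csInf_le hbdd (⟨ht0, ht0n⟩ : t0 ∈ E)) ht0.2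
  have hxT : x < T := by
    obtain ⟨ε, hε, hball⟩ := Metric.isOpen_iff.1 hI x hxI
    have : ∀ t ∈ E, x + ε ≤ t := by
      intro t ht
      by_contra hc
      push_neg at hc
      have htx : x ≤ t := ht.1.1
      have : t ∈ Metric.ball x ε := by
        rw [Metric.mem_ball, Real.dist_eq, abs_of_nonneg (by linarith)]
        linarith
      exact ht.2 (hball this)
    have := le_csInf hne this
    linarith
  have hIcoT : Set.Ico x T ⊆ I := by
    intro t ht
    by_contra htn
    have htE : t ∈ E := ⟨⟨ht.1, lt_trans ht.2 hTlt⟩, htn⟩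
    exact absurd (csInf_le hbdd htE) (not_le.2 ht.2)
  obtain ⟨ξ, hξ, hslope⟩ := exists_hasDerivAt_eq_slope h (deriv h) hxT hcont.continuousOn
    (fun t ht => (hdiff t (hIcoT ⟨ht.1.le, ht.2⟩)).hasDerivAt)
  have hξI : ξ ∈ I := hIcoT ⟨hξ.1.le, hξ.2⟩
  have hT0 : h T = 0 := hzero T hTnI
  rw [hT0] at hslope
  have habs : |deriv h ξ - M| ≤ |M|/2 := by
    have h1 := hHol ξ hξI x hxI
    have h2 : |ξ - x| ≤ ρ := by
      rw [abs_of_nonneg (by linarith [hξ.1])]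
      linarith [hξ.2, hTlt]
    have h3 : |ξ - x| ^ ((1:ℝ)/2) ≤ ρ ^ ((1:ℝ)/2) :=
      Real.rpow_le_rpow (abs_nonneg _) h2 (by norm_num)
    have h4 : ρ ^ ((1:ℝ)/2) = |M| / (2*B) := by
      rw [hρdef, sq_rpow_half, abs_div, abs_of_pos (by positivity : (0:ℝ) < 2*B)]
    calc |deriv h ξ - M| ≤ B * |ξ - x| ^ ((1:ℝ)/2) := h1
      _ ≤ B * (|M|/(2*B)) := by rw [← h4]; exact mul_le_mul_of_nonneg_left h3 hB.le
      _ = |M|/2 := by field_simp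
  have hTx : 0 < T - x := by linarith
  have heq : deriv h ξ * (T - x) = - h x := by
    rw [hslope]
    field_simp
    ring
  have hprod : 0 < M * deriv h ξ := by
    rcases hMne.lt_or_gt with hneg | hpos
    · have : deriv h ξ ≤ M/2 := by
        have := (abs_le.1 habs).2
        rw [abs_of_neg hneg] at this
        linarith
      have hd : deriv h ξ < 0 := by linarith
      exact mul_pos_of_neg_of_neg hneg hd
    · have : M/2 ≤ deriv h ξ := by
        have := (abs_le.1 habs).1
        rw [abs_of_pos hpos] at this
        linarith
      exact mul_pos hpos (by linarith)
  have heq2 : M * (deriv h ξ * (T - x)) = M * (- h x) := by rw [heq]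
  nlinarith [mul_pos hprod hTx, heq2]

lemma exitB {I : Set ℝ} {h : ℝ → ℝ} {B x : ℝ} (hI : IsOpen I) (hB : 0 < B)
    (hcont : Continuous h) (hzero : ∀ y, y ∉ I → h y = 0)
    (hdiff : ∀ y ∈ I, DifferentiableAt ℝ h y)
    (hHol : ∀ y ∈ I, ∀ z ∈ I, |deriv h y - deriv h z| ≤ B * |y - z| ^ ((1:ℝ)/2))
    (hxI : x ∈ I) (hM : deriv h x ≠ 0)
    (hnot : ¬ (Set.Ioc (x - (deriv h x/(2*B))^2) x ⊆ I)) :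
    0 < deriv h x * h x := by
  set M := deriv h x with hMdef
  set ρ := (M/(2*B))^2 with hρdef
  have hMne : M ≠ 0 := hM
  have hρpos : 0 < ρ := by
    have h1 : M/(2*B) ≠ 0 := div_ne_zero hMne (by positivity)
    positivity
  set E := Set.Ioc (x - ρ) x ∩ Iᶜ with hE
  obtain ⟨t0, ht0, ht0n⟩ := Set.not_subset.1 hnot
  have hne : E.Nonempty := ⟨t0, ht0, ht0n⟩
  have hbdd : BddAbove E := ⟨x, fun t ht => ht.1.2⟩
  set T := sSup E with hT
  have hTnI : T ∉ I := by
    have h1 : T ∈ closure E := csSup_mem_closure hne hbdd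
    have h2 : closure E ⊆ Iᶜ := by
      calc closure E ⊆ closure Iᶜ := closure_mono Set.inter_subset_right
        _ = Iᶜ := (hI.isClosed_compl).closure_eq
    exact h2 h1
  have hTgt : x - ρ < T := lt_of_lt_of_le ht0.1 (le_csSup hbdd ⟨ht0, ht0n⟩)
  have hxT : T < x := by
    obtain ⟨ε, hε, hball⟩ := Metric.isOpen_iff.1 hI x hxI
    have : ∀ t ∈ E, t ≤ x - ε := by
      intro t ht
      by_contra hc
      push_neg at hc
      have htx : t ≤ x := ht.1.2
      have : t ∈ Metric.ball x ε := by
        rw [Metric.mem_ball, Real.dist_eq, abs_of_nonpos (by linarith)]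
        linarith
      exact ht.2 (hball this)
    have := csSup_le hne this
    linarith
  have hIocT : Set.Ioc T x ⊆ I := by
    intro t ht
    by_contra htn
    have htE : t ∈ E := ⟨⟨lt_trans hTgt ht.1, ht.2⟩, htn⟩
    exact absurd (le_csSup hbdd htE) (not_le.2 ht.1)
  obtain ⟨ξ, hξ, hslope⟩ := exists_hasDerivAt_eq_slope h (deriv h) hxT hcont.continuousOn
    (fun t ht => (hdiff t (hIocT ⟨ht.1, ht.2.le⟩)).hasDerivAt)
  have hξI : ξ ∈ I := hIocT ⟨hξ.1, hξ.2.le⟩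
  have hT0 : h T = 0 := hzero T hTnI
  rw [hT0] at hslope
  have habs : |deriv h ξ - M| ≤ |M|/2 := by
    have h1 := hHol ξ hξI x hxI
    have h2 : |ξ - x| ≤ ρ := by
      rw [abs_of_nonpos (by linarith [hξ.2])]
      linarith [hξ.1, hTgt]
    have h3 : |ξ - x| ^ ((1:ℝ)/2) ≤ ρ ^ ((1:ℝ)/2) :=
      Real.rpow_le_rpow (abs_nonneg _) h2 (by norm_num)
    have h4 : ρ ^ ((1:ℝ)/2) = |M| / (2*B) := by
      rw [hρdef, sq_rpow_half, abs_div, abs_of_pos (by positivity : (0:ℝ) < 2*B)]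
    calc |deriv h ξ - M| ≤ B * |ξ - x| ^ ((1:ℝ)/2) := h1
      _ ≤ B * (|M|/(2*B)) := by rw [← h4]; exact mul_le_mul_of_nonneg_left h3 hB.le
      _ = |M|/2 := by field_simp
  have hTx : 0 < x - T := by linarith
  have heq : deriv h ξ * (x - T) = h x := by
    rw [hslope]
    field_simp
    ring
  have hprod : 0 < M * deriv h ξ := by
    rcases hMne.lt_or_gt with hneg | hpos
    · have : deriv h ξ ≤ M/2 := by
        have := (abs_le.1 habs).2
        rw [abs_of_neg hneg] at this
        linarith
      have hd : deriv h ξ < 0 := by linarith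
      exact mul_pos_of_neg_of_neg hneg hd
    · have : M/2 ≤ deriv h ξ := by
        have := (abs_le.1 habs).1
        rw [abs_of_pos hpos] at this
        linarith
      exact mul_pos hpos (by linarith)
  have heq2 : M * (deriv h ξ * (x - T)) = M * h x := by rw [heq]
  nlinarith [mul_pos hprod hTx, heq2]

lemma dichotomy {I : Set ℝ} {h : ℝ → ℝ} {B x : ℝ} (hI : IsOpen I) (hB : 0 < B)
    (hcont : Continuous h) (hzero : ∀ y, y ∉ I → h y = 0)
    (hdiff : ∀ y ∈ I, DifferentiableAt ℝ h y)
    (hHol : ∀ y ∈ I, ∀ z ∈ I, |deriv h y - deriv h z| ≤ B * |y - z| ^ ((1:ℝ)/2))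
    (hxI : x ∈ I) (hM : deriv h x ≠ 0) :
    Set.Ico x (x + (deriv h x/(2*B))^2) ⊆ I ∨ Set.Ioc (x - (deriv h x/(2*B))^2) x ⊆ I := by
  by_contra hc
  push_neg at hc
  have h1 := exitF hI hB hcont hzero hdiff hHol hxI hM hc.1
  have h2 := exitB hI hB hcont hzero hdiff hHol hxI hM hc.2
  linarith
lemma claimPos {I : Set ℝ} {h : ℝ → ℝ} {B x : ℝ} (hI : IsOpen I) (hB : 0 < B)
    (hcont : Continuous h) (hzero : ∀ y, y ∉ I → h y = 0)
    (hdiff : ∀ y ∈ I, DifferentiableAt ℝ h y)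
    (hHol : ∀ y ∈ I, ∀ z ∈ I, |deriv h y - deriv h z| ≤ B * |y - z| ^ ((1:ℝ)/2))
    (hxI : x ∈ I) (hM : 0 < deriv h x) :
    ∃ c, Set.Icc c (c + (deriv h x/(2*B))^2/8) ⊆
        I ∩ Set.Icc (x - (deriv h x/(2*B))^2) (x + (deriv h x/(2*B))^2) ∧
      ∀ y ∈ Set.Icc c (c + (deriv h x/(2*B))^2/8),
        (deriv h x * (deriv h x/(2*B))^2/8)^2 ≤ (h y)^2 ∧
        deriv h x / 2 ≤ |deriv h y| ∧ |deriv h y| ≤ 3 * deriv h x / 2 := by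
  set M := deriv h x with hMdef
  set ρ := (M/(2*B))^2 with hρdef
  have hρpos : 0 < ρ := by positivity
  rcases dichotomy hI hB hcont hzero hdiff hHol hxI (ne_of_gt hM) with hdir | hdir
  · -- forward direction: apply coreL1 directly
    obtain ⟨c, hsub, hvals⟩ := coreL1 hB hdiff hHol hxI hM hdir
    refine ⟨c, ?_, hvals⟩
    intro y hy
    have h1 := hsub hy
    exact ⟨hdir h1, ⟨by linarith [h1.1, hρpos], by linarith [h1.2]⟩⟩
  · -- backward direction: reflect
    set h' : ℝ → ℝ := fun t => - h (2*x - t) with hh'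
    set I' : Set ℝ := (fun t => 2*x - t) ⁻¹' I with hI'
    have hI'open : IsOpen I' := hI.preimage (by continuity)
    have hrefl : ∀ t : ℝ, 2*x - (2*x - t) = t := fun t => by ring
    have hder : ∀ t ∈ I', HasDerivAt h' (deriv h (2*x - t)) t := by
      intro t ht
      have h1 : HasDerivAt (fun s : ℝ => 2*x - s) (-1) t := by
        simpa using (hasDerivAt_id t).const_sub (2*x)
      have h2 := ((hdiff _ ht).hasDerivAt.comp t h1).neg
      have h3 : HasDerivAt h' (-(deriv h (2*x - t) * -1)) t := h2
      simpa using h3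
    have hderI' : ∀ t ∈ I', deriv h' t = deriv h (2*x - t) := fun t ht => (hder t ht).deriv
    have hxI' : x ∈ I' := by
      show 2*x - x ∈ I
      convert hxI using 2
      ring
    have hd'x : deriv h' x = deriv h x := by
      rw [hderI' x hxI']
      congr 1
      ring
    have hdiff' : ∀ t ∈ I', DifferentiableAt ℝ h' t := fun t ht =>
      (hder t ht).differentiableAt
    have hHol' : ∀ t ∈ I', ∀ s ∈ I', |deriv h' t - deriv h' s| ≤ B * |t - s| ^ ((1:ℝ)/2) := by
      intro t ht s hs
      rw [hderI' t ht, hderI' s hs]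
      have := hHol (2*x - t) ht (2*x - s) hs
      have heq : |(2*x - t) - (2*x - s)| = |t - s| := by
        rw [show (2*x - t) - (2*x - s) = -(t - s) by ring, abs_neg]
      rwa [heq] at this
    have hsub' : Set.Ico x (x + (deriv h' x/(2*B))^2) ⊆ I' := by
      rw [hd'x]
      intro t ht
      show 2*x - t ∈ I
      apply hdir
      exact ⟨by linarith [ht.2], by linarith [ht.1]⟩
    obtain ⟨c, hsub2, hvals⟩ := coreL1 hB hdiff' hHol' hxI' (hd'x ▸ hM) hsub'
    rw [hd'x] at hsub2 hvals
    refine ⟨2*x - (c + ρ/8), ?_, ?_⟩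
    · intro y hy
      rw [Set.mem_Icc] at hy
      have hz : 2*x - y ∈ Set.Icc c (c + ρ/8) := by
        constructor <;> linarith [hy.1, hy.2]
      have hz2 := hsub2 hz
      have hzI' : 2*x - y ∈ I' := hsub' (by rw [hd'x]; exact hz2)
      have hyI : y ∈ I := by
        have := hzI'
        rw [hI', Set.mem_preimage, hrefl] at this
        exact this
      refine ⟨hyI, ?_, ?_⟩
      · linarith [hz2.1, hz2.2]
      · linarith [hz2.1, hz2.2]
    · intro y hy
      rw [Set.mem_Icc] at hy
      have hz : 2*x - y ∈ Set.Icc c (c + ρ/8) := by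
        constructor <;> linarith [hy.1, hy.2]
      obtain ⟨hv1, hv2, hv3⟩ := hvals _ hz
      have hzI' : 2*x - y ∈ I' := hsub' (by rw [hd'x]; exact hsub2 hz)
      have e1 : (h' (2*x - y))^2 = (h y)^2 := by
        rw [hh']
        simp only [hrefl, neg_sq]
      have e2 : deriv h' (2*x - y) = deriv h y := by
        rw [hderI' _ hzI', hrefl]
      rw [e1] at hv1
      rw [e2] at hv2 hv3
      exact ⟨hv1, hv2, hv3⟩

lemma claim1D {I : Set ℝ} {h : ℝ → ℝ} {B x : ℝ} (hI : IsOpen I) (hB : 0 < B)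
    (hcont : Continuous h) (hzero : ∀ y, y ∉ I → h y = 0)
    (hdiff : ∀ y ∈ I, DifferentiableAt ℝ h y)
    (hHol : ∀ y ∈ I, ∀ z ∈ I, |deriv h y - deriv h z| ≤ B * |y - z| ^ ((1:ℝ)/2))
    (hxI : x ∈ I) (hM : deriv h x ≠ 0) :
    ∃ c, Set.Icc c (c + (deriv h x/(2*B))^2/8) ⊆
        I ∩ Set.Icc (x - (deriv h x/(2*B))^2) (x + (deriv h x/(2*B))^2) ∧
      ∀ y ∈ Set.Icc c (c + (deriv h x/(2*B))^2/8),
        (|deriv h x| * (deriv h x/(2*B))^2/8)^2 ≤ (h y)^2 ∧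
        |deriv h x| / 2 ≤ |deriv h y| ∧ |deriv h y| ≤ 3 * |deriv h x| / 2 := by
  rcases hM.lt_or_gt with hneg | hpos
  · -- apply claimPos to -h
    set h₁ : ℝ → ℝ := fun t => - h t with hh₁
    have hd₁ : ∀ t, deriv h₁ t = - deriv h t := by
      intro t
      simp [hh₁, deriv.neg]
    have hcont₁ : Continuous h₁ := hcont.neg
    have hzero₁ : ∀ y, y ∉ I → h₁ y = 0 := fun y hy => by simp [hh₁, hzero y hy]
    have hdiff₁ : ∀ y ∈ I, DifferentiableAt ℝ h₁ y := fun y hy => (hdiff y hy).neg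
    have hHol₁ : ∀ y ∈ I, ∀ z ∈ I, |deriv h₁ y - deriv h₁ z| ≤ B * |y - z| ^ ((1:ℝ)/2) := by
      intro y hy z hz
      rw [hd₁, hd₁, show -deriv h y - -deriv h z = -(deriv h y - deriv h z) by ring, abs_neg]
      exact hHol y hy z hz
    have hM₁ : 0 < deriv h₁ x := by rw [hd₁]; linarith
    obtain ⟨c, hsub, hvals⟩ := claimPos hI hB hcont₁ hzero₁ hdiff₁ hHol₁ hxI hM₁
    have hρeq : (deriv h₁ x/(2*B))^2 = (deriv h x/(2*B))^2 := by
      rw [hd₁]; ring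
    rw [hρeq] at hsub hvals
    refine ⟨c, hsub, ?_⟩
    intro y hy
    obtain ⟨hv1, hv2, hv3⟩ := hvals y hy
    have e1 : (h₁ y)^2 = (h y)^2 := by simp [hh₁]
    have e2 : |deriv h₁ y| = |deriv h y| := by rw [hd₁, abs_neg]
    have e3 : deriv h₁ x = |deriv h x| := by rw [hd₁, abs_of_neg hneg]
    rw [e1] at hv1
    rw [e2] at hv2 hv3
    rw [e3] at hv1 hv2 hv3
    exact ⟨hv1, hv2, hv3⟩
  · obtain ⟨c, hsub, hvals⟩ := claimPos hI hB hcont hzero hdiff hHol hxI hpos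
    refine ⟨c, hsub, ?_⟩
    intro y hy
    obtain ⟨hv1, hv2, hv3⟩ := hvals y hy
    rw [abs_of_pos hpos]
    exact ⟨hv1, hv2, hv3⟩
lemma oneD {I : Set ℝ} {h : ℝ → ℝ} {B : ℝ} (hI : IsOpen I) (hB : 0 < B)
    (hcont : Continuous h) (hzero : ∀ y, y ∉ I → h y = 0)
    (hdiff : ∀ y ∈ I, DifferentiableAt ℝ h y)
    (hHol : ∀ y ∈ I, ∀ z ∈ I, |deriv h y - deriv h z| ≤ B * |y - z| ^ ((1:ℝ)/2)) :
    ∫⁻ t in I, ENNReal.ofReal ((deriv h t)^6) ≤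
      ENNReal.ofReal (147456 * B^4) * ∫⁻ t in I, ENNReal.ofReal ((h t)^2) := by
  have hB0 : B ≠ 0 := ne_of_gt hB
  have hd : Measurable (deriv h) := measurable_deriv h
  set A : Set (ℝ × ℝ) :=
    {p | p.2 ∈ I ∧ |p.2 - p.1| ≤ (deriv h p.2)^2/B^2 ∧ deriv h p.2 ≠ 0} with hA
  have hAmeas : MeasurableSet A := by
    have h1 : MeasurableSet {p : ℝ × ℝ | p.2 ∈ I} := hI.measurableSet.preimage measurable_snd
    have h2 : MeasurableSet {p : ℝ × ℝ | |p.2 - p.1| ≤ (deriv h p.2)^2/B^2} := by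
      apply measurableSet_le
      · exact (measurable_snd.sub measurable_fst).abs
      · exact ((hd.comp measurable_snd).pow_const 2).div_const _
    have h3 : MeasurableSet {p : ℝ × ℝ | deriv h p.2 ≠ 0} :=
      ((hd.comp measurable_snd) (measurableSet_singleton 0)).compl
    have : A = {p : ℝ × ℝ | p.2 ∈ I} ∩
        ({p : ℝ × ℝ | |p.2 - p.1| ≤ (deriv h p.2)^2/B^2} ∩ {p : ℝ × ℝ | deriv h p.2 ≠ 0}) := by
      ext p; simp [hA, and_assoc]
    rw [this]
    exact h1.inter (h2.inter h3)
  set F : ℝ × ℝ → ℝ≥0∞ :=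
    A.indicator (fun p => ENNReal.ofReal (9216 * B^6 * (h p.2)^2 / (deriv h p.2)^2)) with hF
  have hFmeas : Measurable F := by
    apply Measurable.indicator _ hAmeas
    apply ENNReal.measurable_ofReal.comp
    exact (measurable_const.mul ((hcont.measurable.comp measurable_snd).pow_const 2)).div
      ((hd.comp measurable_snd).pow_const 2)
  -- Step 1 : pointwise lower bound
  have key : ∀ x ∈ I, ENNReal.ofReal ((deriv h x)^6) ≤ 8 * ∫⁻ y, F (x, y) := by
    intro x hxI
    by_cases hM : deriv h x = 0
    · simp [hM]
    obtain ⟨c, hsubJ, hvals⟩ := claim1D hI hB hcont hzero hdiff hHol hxI hM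
    set M := |deriv h x| with hMdef
    set ρ := (deriv h x/(2*B))^2 with hρdef
    have hMpos : 0 < M := abs_pos.2 hM
    have hρpos : 0 < ρ := by
      have : deriv h x/(2*B) ≠ 0 := div_ne_zero hM (by positivity)
      positivity
    have hρeq : ρ = M^2/(4*B^2) := by
      rw [hρdef, hMdef, div_pow, ← sq_abs (deriv h x)]
      ring
    set J := Set.Icc c (c + ρ/8) with hJ
    -- on J, F (x, ·) is at least 4 B² M⁴
    have hFlow : ∀ y ∈ J, ENNReal.ofReal (4*B^2*M^4) ≤ F (x, y) := by
      intro y hy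
      obtain ⟨hv1, hv2, hv3⟩ := hvals y hy
      have hyII := hsubJ hy
      have hyI : y ∈ I := hyII.1
      have hyIcc := hyII.2
      have hdy : deriv h y ≠ 0 := by
        intro hz
        rw [hz, abs_zero] at hv2
        linarith
      have hmemA : (x, y) ∈ A := by
        refine ⟨hyI, ?_, hdy⟩
        have h1 : |y - x| ≤ ρ := by
          rw [abs_le]
          constructor <;> [linarith [hyIcc.1]; linarith [hyIcc.2]]
        have h2 : ρ ≤ (deriv h y)^2/B^2 := by
          have : (M/2)^2 ≤ |deriv h y|^2 := by
            apply pow_le_pow_left₀ (by positivity) hv2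
          rw [sq_abs] at this
          rw [hρeq]
          rw [div_le_div_iff₀ (by positivity) (by positivity)]
          nlinarith [this]
        exact h1.trans h2
      rw [hF, Set.indicator_of_mem hmemA]
      apply ENNReal.ofReal_le_ofReal
      -- real inequality
      have hdy2 : (deriv h y)^2 ≤ 9*M^2/4 := by
        have : |deriv h y|^2 ≤ (3*M/2)^2 := pow_le_pow_left₀ (abs_nonneg _) hv3 2
        rw [sq_abs] at this
        nlinarith [this]
      have hdy2pos : 0 < (deriv h y)^2 := by
        have h0 : 0 < |deriv h y| := abs_pos.2 hdy
        have := pow_pos h0 2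
        rwa [sq_abs] at this
      rw [le_div_iff₀ hdy2pos]
      have h1 : 4*B^2*M^4 * (deriv h y)^2 ≤ 4*B^2*M^4 * (9*M^2/4) :=
        mul_le_mul_of_nonneg_left hdy2 (by positivity)
      have h2 : 9216*B^6*(M*ρ/8)^2 ≤ 9216*B^6*(h y)^2 := by
        apply mul_le_mul_of_nonneg_left _ (by positivity)
        exact hv1
      have h3 : 9216*B^6*(M*ρ/8)^2 = 9*B^2*M^6 := by
        rw [hρeq]
        field_simp
        ring
      nlinarith [h1, h2, h3]
    -- integrate the lower bound over J
    have hJvol : (volume J) = ENNReal.ofReal (ρ/8) := by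
      rw [hJ, Real.volume_Icc]
      congr 1
      ring
    have hlow : ENNReal.ofReal (4*B^2*M^4) * ENNReal.ofReal (ρ/8) ≤ ∫⁻ y, F (x, y) := by
      calc ENNReal.ofReal (4*B^2*M^4) * ENNReal.ofReal (ρ/8)
          = ∫⁻ y in J, ENNReal.ofReal (4*B^2*M^4) := by
            rw [setLIntegral_const, hJvol]
        _ ≤ ∫⁻ y in J, F (x, y) := by
            apply setLIntegral_mono (hFmeas.comp (measurable_prodMk_left))
            exact hFlow
        _ ≤ ∫⁻ y, F (x, y) := setLIntegral_le_lintegral _ _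
    have hM6 : ENNReal.ofReal ((deriv h x)^6) = 8 * (ENNReal.ofReal (4*B^2*M^4) * ENNReal.ofReal (ρ/8)) := by
      rw [← ENNReal.ofReal_mul (by positivity), ← ENNReal.ofReal_ofNat 8,
        ← ENNReal.ofReal_mul (by norm_num)]
      congr 1
      have : (deriv h x)^6 = M^6 := by
        rw [hMdef, ← abs_pow]
        symm
        apply abs_of_nonneg
        positivity
      rw [this, hρeq]
      field_simp
    rw [hM6]
    exact mul_le_mul_of_nonneg_left hlow (by positivity)
  -- Step 2 : integrate, swap, bound inner integral
  have step2 : ∫⁻ t in I, ENNReal.ofReal ((deriv h t)^6) ≤ 8 * ∫⁻ t, ∫⁻ y, F (t, y) := by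
    calc ∫⁻ t in I, ENNReal.ofReal ((deriv h t)^6)
        ≤ ∫⁻ t in I, 8 * ∫⁻ y, F (t, y) := by
          apply setLIntegral_mono
          · exact measurable_const.mul (hFmeas.lintegral_prod_right')
          · exact key
      _ ≤ ∫⁻ t, 8 * ∫⁻ y, F (t, y) := setLIntegral_le_lintegral _ _
      _ = 8 * ∫⁻ t, ∫⁻ y, F (t, y) := lintegral_const_mul 8 hFmeas.lintegral_prod_right'
  have hswap : ∫⁻ t, ∫⁻ y, F (t, y) = ∫⁻ y, ∫⁻ t, F (t, y) :=
    lintegral_lintegral_swap hFmeas.aemeasurable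
  -- Step 4 : inner bound
  have step4 : ∀ y : ℝ, (∫⁻ t, F (t, y)) ≤
      I.indicator (fun y => ENNReal.ofReal (18432 * B^4 * (h y)^2)) y := by
    intro y
    by_cases hy : y ∈ I ∧ deriv h y ≠ 0
    · obtain ⟨hyI, hdy⟩ := hy
      set k := (deriv h y)^2/B^2 with hk
      have hkpos : 0 < k := by
        have h0 : 0 < |deriv h y| := abs_pos.2 hdy
        have h1 := pow_pos h0 2
        rw [sq_abs] at h1
        positivity
      have hFle : ∀ t : ℝ, F (t, y) ≤
          (Set.Icc (y - k) (y + k)).indicator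
            (fun _ => ENNReal.ofReal (9216 * B^6 * (h y)^2 / (deriv h y)^2)) t := by
        intro t
        by_cases hmem : (t, y) ∈ A
        · rw [hF, Set.indicator_of_mem hmem]
          have htIcc : t ∈ Set.Icc (y - k) (y + k) := by
            have := hmem.2.1
            rw [abs_le] at this
            constructor <;> linarith [this.1, this.2]
          rw [Set.indicator_of_mem htIcc]
        · rw [hF, Set.indicator_of_notMem hmem]
          exact zero_le
      calc ∫⁻ t, F (t, y)
          ≤ ∫⁻ t, (Set.Icc (y - k) (y + k)).indicator
              (fun _ => ENNReal.ofReal (9216 * B^6 * (h y)^2 / (deriv h y)^2)) t :=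
            lintegral_mono hFle
        _ = ENNReal.ofReal (9216 * B^6 * (h y)^2 / (deriv h y)^2) * volume (Set.Icc (y - k) (y + k)) := by
            rw [lintegral_indicator_const measurableSet_Icc]
        _ = ENNReal.ofReal (18432 * B^4 * (h y)^2) := by
            rw [Real.volume_Icc, show y + k - (y - k) = 2*k by ring,
              ← ENNReal.ofReal_mul (by positivity)]
            congr 1
            rw [hk]
            have hdy2 : (deriv h y)^2 ≠ 0 := by
              intro hc
              exact hdy (pow_eq_zero_iff (by norm_num) |>.1 hc)
            field_simp
            ring
        _ = I.indicator (fun y => ENNReal.ofReal (18432 * B^4 * (h y)^2)) y := by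
            rw [Set.indicator_of_mem hyI]
    · have hFzero : ∀ t : ℝ, F (t, y) = 0 := by
        intro t
        rw [hF, Set.indicator_of_notMem]
        intro hmem
        exact hy ⟨hmem.1, hmem.2.2⟩
      simp only [hFzero, lintegral_zero]
      exact zero_le
  -- Step 5 : conclude
  calc ∫⁻ t in I, ENNReal.ofReal ((deriv h t)^6)
      ≤ 8 * ∫⁻ t, ∫⁻ y, F (t, y) := step2
    _ = 8 * ∫⁻ y, ∫⁻ t, F (t, y) := by rw [hswap]
    _ ≤ 8 * ∫⁻ y, I.indicator (fun y => ENNReal.ofReal (18432 * B^4 * (h y)^2)) y := by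
        apply mul_le_mul_of_nonneg_left _ zero_le
        exact lintegral_mono step4
    _ = 8 * ∫⁻ y in I, ENNReal.ofReal (18432 * B^4 * (h y)^2) := by
        rw [lintegral_indicator hI.measurableSet]
    _ = 8 * (ENNReal.ofReal (18432 * B^4) * ∫⁻ y in I, ENNReal.ofReal ((h y)^2)) := by
        congr 1
        rw [← lintegral_const_mul' _ _ ENNReal.ofReal_ne_top]
        congr 1
        funext y
        rw [← ENNReal.ofReal_mul (by positivity)]
    _ = ENNReal.ofReal (147456 * B^4) * ∫⁻ y in I, ENNReal.ofReal ((h y)^2) := by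
        rw [← mul_assoc, ← ENNReal.ofReal_ofNat 8, ← ENNReal.ofReal_mul (by norm_num)]
        congr 1
        ring

lemma ext_continuous {E : Type*} [MetricSpace E] {S : Set E} {g : E → ℝ}
    (hSo : IsOpen S) (hgc : ContinuousOn g (closure S))
    (hgz : ∀ x ∈ frontier S, g x = 0) :
    Continuous (S.indicator g) := by
  set f : E → ℝ := S.indicator g with hf
  rw [continuous_iff_continuousAt]
  intro x
  by_cases hx : x ∈ S
  · have h1 : f =ᶠ[nhds x] g :=
      Filter.eventuallyEq_of_mem (hSo.mem_nhds hx) (fun y hy => Set.indicator_of_mem hy g)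
    have h2 : ContinuousAt g x :=
      (hgc x (subset_closure hx)).continuousAt
        (Filter.mem_of_superset (hSo.mem_nhds hx) subset_closure)
    exact h2.congr h1.symm
  by_cases hx2 : x ∈ closure S
  · -- frontier point
    have hxf : x ∈ frontier S := by
      rw [frontier, hSo.interior_eq]
      exact ⟨hx2, hx⟩
    have hfx : f x = 0 := Set.indicator_of_notMem hx g
    rw [ContinuousAt, hfx]
    apply Metric.tendsto_nhds.2
    intro ε hε
    have h1 : Filter.Tendsto g (nhdsWithin x (closure S)) (nhds 0) := by
      have := hgc x hx2
      rwa [ContinuousWithinAt, hgz x hxf] at this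
    have h2 : ∀ᶠ y in nhdsWithin x (closure S), |g y| < ε := by
      have := Metric.tendsto_nhds.1 h1 ε hε
      simpa [Real.dist_eq] using this
    rw [eventually_nhdsWithin_iff] at h2
    filter_upwards [h2] with y hy
    rw [Real.dist_eq, sub_zero]
    by_cases hyS : y ∈ S
    · rw [hf, Set.indicator_of_mem hyS]
      exact hy (subset_closure hyS)
    · rw [hf, Set.indicator_of_notMem hyS, abs_zero]
      exact hε
  · have h1 : f =ᶠ[nhds x] (fun _ => (0:ℝ)) := by
      apply Filter.eventuallyEq_of_mem (((isClosed_closure (s := S)).isOpen_compl).mem_nhds hx2)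
      intro y hy
      exact Set.indicator_of_notMem (fun hyS => hy (subset_closure hyS)) g
    exact continuousAt_const.congr h1.symm

lemma norm_pow_six_le {n : ℕ} (hn : 0 < n) (u : EuclideanSpace ℝ (Fin n)) :
    ‖u‖^6 ≤ (n:ℝ)^3 * ∑ i, (u i)^6 := by
  have h2 : ‖u‖^2 = ∑ i, (u i)^2 := by
    rw [EuclideanSpace.norm_eq, Real.sq_sqrt (by positivity)]
    simp [Real.norm_eq_abs, sq_abs]
  have : Nonempty (Fin n) := Fin.pos_iff_nonempty.1 hn
  obtain ⟨j, _, hj⟩ := Finset.exists_max_image Finset.univ (fun i => (u i)^2)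
    Finset.univ_nonempty
  have hsum : ∑ i, (u i)^2 ≤ (n:ℝ) * (u j)^2 := by
    have := Finset.sum_le_card_nsmul Finset.univ (fun i => (u i)^2) ((u j)^2)
      (fun i _ => hj i (Finset.mem_univ i))
    simpa [Finset.card_univ, nsmul_eq_mul] using this
  have h3 : ‖u‖^6 = (‖u‖^2)^3 := by ring
  have h4 : (‖u‖^2)^3 ≤ ((n:ℝ) * (u j)^2)^3 := by
    apply pow_le_pow_left₀ (by positivity)
    rw [h2]; exact hsum
  have h5 : ((n:ℝ) * (u j)^2)^3 = (n:ℝ)^3 * (u j)^6 := by ring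
  have h6 : (u j)^6 ≤ ∑ i, (u i)^6 :=
    Finset.single_le_sum (f := fun i => (u i)^6) (fun i _ => by positivity) (Finset.mem_univ j)
  calc ‖u‖^6 = (‖u‖^2)^3 := h3
    _ ≤ ((n:ℝ) * (u j)^2)^3 := h4
    _ = (n:ℝ)^3 * (u j)^6 := h5
    _ ≤ (n:ℝ)^3 * ∑ i, (u i)^6 := by
        apply mul_le_mul_of_nonneg_left h6 (by positivity)
lemma sliceBound {m : ℕ} {S : Set (EuclideanSpace ℝ (Fin (m+1)))}
    {g1 : EuclideanSpace ℝ (Fin (m+1)) → ℝ} {B : ℝ} (i : Fin (m+1))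
    (hSo : IsOpen S) (hB : 0 < B) (hg1c : Continuous g1)
    (hg1z : ∀ x, x ∉ S → g1 x = 0)
    (hg1d : ∀ x ∈ S, DifferentiableAt ℝ g1 x)
    (hHol1 : ∀ x ∈ S, ∀ y ∈ S,
      |fderiv ℝ g1 x (EuclideanSpace.single i 1) - fderiv ℝ g1 y (EuclideanSpace.single i 1)| ≤
        B * ‖x - y‖ ^ ((1:ℝ)/2)) :
    ∫⁻ x in S, ENNReal.ofReal ((fderiv ℝ g1 x (EuclideanSpace.single i 1))^6) ≤
      ENNReal.ofReal (147456 * B^4) * ∫⁻ x in S, ENNReal.ofReal ((g1 x)^2) := by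
  classical
  set e : EuclideanSpace ℝ (Fin (m+1)) := EuclideanSpace.single i 1 with he
  set ψ := (MeasurableEquiv.toLp 2 (Fin (m+1) → ℝ)).symm with hψdef
  set κ := MeasurableEquiv.piFinSuccAbove (fun _ : Fin (m+1) => ℝ) i with hκdef
  set P : (Fin m → ℝ) → ℝ → EuclideanSpace ℝ (Fin (m+1)) := fun w t => ψ.symm (κ.symm (t, w)) with hPdef
  -- transport of integrals
  have transport : ∀ (F0 : EuclideanSpace ℝ (Fin (m+1)) → ℝ≥0∞), Measurable F0 →
      ∫⁻ x, F0 x = ∫⁻ w, ∫⁻ t, F0 (P w t) := by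
    intro F0 hF0
    have h1 : ∫⁻ v : (Fin (m+1) → ℝ), F0 (ψ.symm v) = ∫⁻ x, F0 x :=
      ((EuclideanSpace.volume_preserving_symm_measurableEquiv_toLp (Fin (m+1))).symm _).lintegral_comp hF0
    have h2 : ∫⁻ p : ℝ × (Fin m → ℝ), F0 (ψ.symm (κ.symm p)) = ∫⁻ v, F0 (ψ.symm v) :=
      ((volume_preserving_piFinSuccAbove (fun _ : Fin (m+1) => ℝ) i).symm _).lintegral_comp
        (hF0.comp ψ.symm.measurable)
    rw [← h1, ← h2, Measure.volume_eq_prod]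
    exact lintegral_prod_symm (fun p => F0 (ψ.symm (κ.symm p)))
      ((hF0.comp (ψ.symm.measurable.comp κ.symm.measurable)).aemeasurable)
  -- affine structure of the lines
  have hPcoord : ∀ w t, P w t = P w 0 + t • e := by
    intro w t
    ext j
    have hco : ∀ (v : Fin (m+1) → ℝ) (j : Fin (m+1)), ψ.symm v j = v j := by
      intro v j
      rfl
    have hrhs : (P w 0 + t • e) j = P w 0 j + t * e j := rfl
    rw [hrhs]
    show ψ.symm (i.insertNth t w) j = ψ.symm (i.insertNth 0 w) j + t * e j
    rw [hco, hco]
    have hej : e j = (Pi.single i (1:ℝ) : Fin (m+1) → ℝ) j := rfl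
    have hcases : ∀ j : Fin (m+1), j = i ∨ ∃ k, j = i.succAbove k :=
      (Fin.forall_iff_succAbove (P := fun j => j = i ∨ ∃ k, j = i.succAbove k) i).2
        ⟨Or.inl rfl, fun k => Or.inr ⟨k, rfl⟩⟩
    rcases hcases j with hj | ⟨k, hk⟩
    · subst hj
      rw [Fin.insertNth_apply_same, Fin.insertNth_apply_same, hej, Pi.single_eq_same]
      ring
    · subst hk
      rw [Fin.insertNth_apply_succAbove, Fin.insertNth_apply_succAbove, hej,
        Pi.single_eq_of_ne (Fin.succAbove_ne i k)]
      ring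
  have hPder : ∀ w t, HasDerivAt (P w) e t := by
    intro w t
    have h0 : P w = fun s => P w 0 + s • e := funext (hPcoord w)
    rw [h0]
    simpa using ((hasDerivAt_id t).smul_const e).const_add (P w 0)
  have hPcont : ∀ w, Continuous (P w) := by
    intro w
    rw [continuous_iff_continuousAt]
    exact fun t => (hPder w t).continuousAt
  have hPnorm : ∀ w t s, ‖P w t - P w s‖ = |t - s| := by
    intro w t s
    have h0 : P w t - P w s = (t - s) • e := by
      rw [hPcoord w t, hPcoord w s, sub_smul]
      abel
    rw [h0, norm_smul, he, EuclideanSpace.norm_single, norm_one, mul_one, Real.norm_eq_abs]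
  -- two integrands
  set f6 : EuclideanSpace ℝ (Fin (m+1)) → ℝ≥0∞ := fun x => ENNReal.ofReal ((fderiv ℝ g1 x e)^6) with hf6
  set f2 : EuclideanSpace ℝ (Fin (m+1)) → ℝ≥0∞ := fun x => ENNReal.ofReal ((g1 x)^2) with hf2
  have hf6m : Measurable f6 :=
    (((measurable_fderiv_apply_const ℝ g1 e).pow_const 6)).ennreal_ofReal
  have hf2m : Measurable f2 := ((hg1c.measurable.pow_const 2)).ennreal_ofReal
  have hSm : MeasurableSet S := hSo.measurableSet
  -- per-slice estimate
  have slice : ∀ w : Fin m → ℝ,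
      ∫⁻ t, (S.indicator f6) (P w t) ≤
        ENNReal.ofReal (147456 * B^4) * ∫⁻ t, (S.indicator f2) (P w t) := by
    intro w
    set Iw : Set ℝ := (P w) ⁻¹' S with hIw
    have hIwo : IsOpen Iw := hSo.preimage (hPcont w)
    set hw : ℝ → ℝ := fun t => g1 (P w t) with hhw
    have hwder : ∀ t ∈ Iw, HasDerivAt hw (fderiv ℝ g1 (P w t) e) t := by
      intro t ht
      exact (hg1d _ ht).hasFDerivAt.comp_hasDerivAt t (hPder w t)
    have hwdiff : ∀ t ∈ Iw, DifferentiableAt ℝ hw t := fun t ht =>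
      (hwder t ht).differentiableAt
    have hwderiv : ∀ t ∈ Iw, deriv hw t = fderiv ℝ g1 (P w t) e := fun t ht =>
      (hwder t ht).deriv
    have hwcont : Continuous hw := hg1c.comp (hPcont w)
    have hwzero : ∀ t, t ∉ Iw → hw t = 0 := fun t ht => hg1z _ ht
    have hwHol : ∀ t ∈ Iw, ∀ s ∈ Iw, |deriv hw t - deriv hw s| ≤ B * |t - s| ^ ((1:ℝ)/2) := by
      intro t ht s hs
      rw [hwderiv t ht, hwderiv s hs]
      have := hHol1 (P w t) ht (P w s) hs
      rwa [hPnorm w t s] at this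
    have main := oneD hIwo hB hwcont hwzero hwdiff hwHol
    have lhseq : ∫⁻ t, (S.indicator f6) (P w t) = ∫⁻ t in Iw, ENNReal.ofReal ((deriv hw t)^6) := by
      have h1 : ∀ t, (S.indicator f6) (P w t) =
          Iw.indicator (fun t => ENNReal.ofReal ((fderiv ℝ g1 (P w t) e)^6)) t := by
        intro t
        by_cases ht : t ∈ Iw
        · rw [Set.indicator_of_mem ht, Set.indicator_of_mem (by exact ht)]
        · rw [Set.indicator_of_notMem ht, Set.indicator_of_notMem (by exact ht)]
      simp_rw [h1]
      rw [lintegral_indicator hIwo.measurableSet]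
      apply setLIntegral_congr_fun_ae hIwo.measurableSet
      filter_upwards with t ht
      rw [hwderiv t ht]
    have rhseq : ∫⁻ t, (S.indicator f2) (P w t) = ∫⁻ t in Iw, ENNReal.ofReal ((hw t)^2) := by
      have h1 : ∀ t, (S.indicator f2) (P w t) =
          Iw.indicator (fun t => ENNReal.ofReal ((hw t)^2)) t := by
        intro t
        by_cases ht : t ∈ Iw
        · rw [Set.indicator_of_mem ht, Set.indicator_of_mem (by exact ht)]
        · rw [Set.indicator_of_notMem ht, Set.indicator_of_notMem (by exact ht)]
      simp_rw [h1]
      rw [lintegral_indicator hIwo.measurableSet]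
    rw [lhseq, rhseq]
    exact main
  -- assemble
  calc ∫⁻ x in S, ENNReal.ofReal ((fderiv ℝ g1 x e)^6)
      = ∫⁻ x, (S.indicator f6) x := by rw [lintegral_indicator hSm]
    _ = ∫⁻ w, ∫⁻ t, (S.indicator f6) (P w t) := transport _ (hf6m.indicator hSm)
    _ ≤ ∫⁻ w, ENNReal.ofReal (147456 * B^4) * ∫⁻ t, (S.indicator f2) (P w t) :=
        lintegral_mono slice
    _ = ENNReal.ofReal (147456 * B^4) * ∫⁻ w, ∫⁻ t, (S.indicator f2) (P w t) := by
        rw [lintegral_const_mul' _ _ ENNReal.ofReal_ne_top]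
    _ = ENNReal.ofReal (147456 * B^4) * ∫⁻ x, (S.indicator f2) x := by
        rw [← transport _ (hf2m.indicator hSm)]
    _ = ENNReal.ofReal (147456 * B^4) * ∫⁻ x in S, ENNReal.ofReal ((g1 x)^2) := by
        rw [lintegral_indicator hSm]

/-- Let `n ≥ 1`. There is a constant `C`, depending only on `n`, such that for
every bounded open set `S ⊆ ℝⁿ` and every `g` continuous on `closure S`, differentiable at every
point of `S`, vanishing on the boundary of `S`, with `∫_S g² ≤ D` and `|∇g(x) − ∇g(y)| ≤
B·|x−y|^{1/2}` on `S` (for constants `B, D > 0`), one has `∫_S |∇g|⁶ ≤ C·B⁴·D`. -/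
theorem statement0 (n : ℕ) (hn : 1 ≤ n) :
    ∃ C : ℝ, 0 < C ∧
      ∀ (S : Set (EuclideanSpace ℝ (Fin n))) (g : EuclideanSpace ℝ (Fin n) → ℝ) (B D : ℝ),
        IsOpen S → Bornology.IsBounded S →
        ContinuousOn g (closure S) →
        (∀ x ∈ S, DifferentiableAt ℝ g x) →
        (∀ x ∈ frontier S, g x = 0) →
        0 < B → 0 < D →
        (∫⁻ x in S, ENNReal.ofReal (g x ^ 2)) ≤ ENNReal.ofReal D →
        (∀ x ∈ S, ∀ y ∈ S, ‖gradient g x - gradient g y‖ ≤ B * ‖x - y‖ ^ (1/2 : ℝ)) →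
        (∫⁻ x in S, ENNReal.ofReal (‖gradient g x‖ ^ 6)) ≤ ENNReal.ofReal (C * B ^ 4 * D) := by
  obtain ⟨m, rfl⟩ : ∃ m, n = m + 1 := ⟨n - 1, (Nat.succ_pred_eq_of_pos hn).symm⟩
  refine ⟨147456 * ((m+1 : ℕ) : ℝ)^4, by positivity, ?_⟩
  intro S g B D hSo hSb hgc hgd hgz hB hD hL2 hHol
  classical
  set g1 := S.indicator g with hg1
  have hg1c : Continuous g1 := ext_continuous hSo hgc hgz
  have hg1z : ∀ x, x ∉ S → g1 x = 0 := fun x hx => Set.indicator_of_notMem hx g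
  have heq : ∀ x ∈ S, g1 =ᶠ[nhds x] g := fun x hx =>
    Filter.eventuallyEq_of_mem (hSo.mem_nhds hx) (fun y hy => Set.indicator_of_mem hy g)
  have hg1d : ∀ x ∈ S, DifferentiableAt ℝ g1 x := fun x hx =>
    (hgd x hx).congr_of_eventuallyEq (heq x hx)
  have hfd : ∀ x ∈ S, fderiv ℝ g1 x = fderiv ℝ g x := fun x hx => (heq x hx).fderiv_eq
  have hcomp : ∀ x ∈ S, ∀ j : Fin (m+1),
      fderiv ℝ g1 x (EuclideanSpace.single j 1) = gradient g x j := by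
    intro x hx j
    rw [hfd x hx]
    have h1 : fderiv ℝ g x = InnerProductSpace.toDual ℝ _ (gradient g x) := by
      rw [gradient, LinearIsometryEquiv.apply_symm_apply]
    rw [h1, InnerProductSpace.toDual_apply_apply, EuclideanSpace.inner_single_right]
    simp
  have hcompabs : ∀ (u : EuclideanSpace ℝ (Fin (m+1))) (j : Fin (m+1)), |u j| ≤ ‖u‖ := by
    intro u j
    have h1 := abs_real_inner_le_norm u (EuclideanSpace.single j (1:ℝ))
    rw [EuclideanSpace.inner_single_right, EuclideanSpace.norm_single] at h1
    simpa using h1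
  have hHol1 : ∀ j : Fin (m+1), ∀ x ∈ S, ∀ y ∈ S,
      |fderiv ℝ g1 x (EuclideanSpace.single j 1) - fderiv ℝ g1 y (EuclideanSpace.single j 1)| ≤
        B * ‖x - y‖ ^ ((1:ℝ)/2) := by
    intro j x hx y hy
    rw [hcomp x hx j, hcomp y hy j]
    have h2 : gradient g x j - gradient g y j = (gradient g x - gradient g y) j := rfl
    calc |gradient g x j - gradient g y j| = |(gradient g x - gradient g y) j| := by rw [h2]
      _ ≤ ‖gradient g x - gradient g y‖ := hcompabs _ _
      _ ≤ B * ‖x - y‖ ^ ((1:ℝ)/2) := hHol x hx y hy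
  have hL2' : ∫⁻ x in S, ENNReal.ofReal ((g1 x)^2) ≤ ENNReal.ofReal D := by
    have : ∫⁻ x in S, ENNReal.ofReal ((g1 x)^2) = ∫⁻ x in S, ENNReal.ofReal ((g x)^2) := by
      apply setLIntegral_congr_fun_ae hSo.measurableSet
      filter_upwards with x hx
      rw [hg1, Set.indicator_of_mem hx]
    rw [this]
    exact hL2
  have hmeasj : ∀ j : Fin (m+1), Measurable fun x =>
      ENNReal.ofReal (((m+1 : ℕ) : ℝ)^3 * (fderiv ℝ g1 x (EuclideanSpace.single j 1))^6) :=
    fun j => (measurable_const.mul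
      ((measurable_fderiv_apply_const ℝ g1 _).pow_const 6)).ennreal_ofReal
  calc ∫⁻ x in S, ENNReal.ofReal (‖gradient g x‖ ^ 6)
      ≤ ∫⁻ x in S, ∑ j : Fin (m+1),
          ENNReal.ofReal (((m+1 : ℕ) : ℝ)^3 * (fderiv ℝ g1 x (EuclideanSpace.single j 1))^6) := by
        apply setLIntegral_mono (Finset.measurable_sum Finset.univ (fun j _ => hmeasj j))
        intro x hx
        calc ENNReal.ofReal (‖gradient g x‖ ^ 6)
            ≤ ENNReal.ofReal (((m+1 : ℕ) : ℝ)^3 * ∑ j, (gradient g x j)^6) :=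
              ENNReal.ofReal_le_ofReal (norm_pow_six_le (Nat.succ_pos m) _)
          _ = ∑ j : Fin (m+1), ENNReal.ofReal (((m+1 : ℕ) : ℝ)^3 * (gradient g x j)^6) := by
              rw [Finset.mul_sum, ENNReal.ofReal_sum_of_nonneg (fun j _ => by positivity)]
          _ = ∑ j : Fin (m+1), ENNReal.ofReal
                (((m+1 : ℕ) : ℝ)^3 * (fderiv ℝ g1 x (EuclideanSpace.single j 1))^6) := by
              apply Finset.sum_congr rfl
              intro j _
              rw [hcomp x hx j]
    _ = ∑ j : Fin (m+1), ∫⁻ x in S,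
          ENNReal.ofReal (((m+1 : ℕ) : ℝ)^3 * (fderiv ℝ g1 x (EuclideanSpace.single j 1))^6) :=
        lintegral_finset_sum Finset.univ (fun j _ => hmeasj j)
    _ ≤ ∑ j : Fin (m+1), ENNReal.ofReal (((m+1 : ℕ) : ℝ)^3) *
          (ENNReal.ofReal (147456 * B^4) * ENNReal.ofReal D) := by
        apply Finset.sum_le_sum
        intro j _
        have h1 : ∫⁻ x in S,
            ENNReal.ofReal (((m+1 : ℕ) : ℝ)^3 * (fderiv ℝ g1 x (EuclideanSpace.single j 1))^6) =
            ENNReal.ofReal (((m+1 : ℕ) : ℝ)^3) *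
              ∫⁻ x in S, ENNReal.ofReal ((fderiv ℝ g1 x (EuclideanSpace.single j 1))^6) := by
          rw [← lintegral_const_mul' _ _ ENNReal.ofReal_ne_top]
          congr 1
          funext x
          rw [← ENNReal.ofReal_mul (by positivity)]
        rw [h1]
        apply mul_le_mul_of_nonneg_left _ zero_le
        calc ∫⁻ x in S, ENNReal.ofReal ((fderiv ℝ g1 x (EuclideanSpace.single j 1))^6)
            ≤ ENNReal.ofReal (147456 * B^4) * ∫⁻ x in S, ENNReal.ofReal ((g1 x)^2) :=
              sliceBound j hSo hB hg1c hg1z hg1d (hHol1 j)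
          _ ≤ ENNReal.ofReal (147456 * B^4) * ENNReal.ofReal D :=
              mul_le_mul_of_nonneg_left hL2' zero_le
    _ = ENNReal.ofReal (147456 * ((m+1 : ℕ) : ℝ)^4 * B ^ 4 * D) := by
        rw [Finset.sum_const, Finset.card_univ, Fintype.card_fin, nsmul_eq_mul]
        rw [show ((m+1 : ℕ) : ℝ≥0∞) = ENNReal.ofReal ((m+1 : ℕ) : ℝ) from
          (ENNReal.ofReal_natCast _).symm]
        rw [← ENNReal.ofReal_mul (by positivity), ← ENNReal.ofReal_mul (by positivity),
          ← ENNReal.ofReal_mul (by positivity)]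
        congr 1
        ring
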